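/- Let $p$ be a prime and $G$ a non-abelian split metacyclic $p$-group with $G = \langle x\rangle \rtimes \langle y\rangle = \langle a\rangle \rtimes \langle b\rangle$, where $\langle x\rangle$ and $\langle a\rangle$ are normal. If $G$ is absolutely split with respect to $\langle a\rangle$, then $G$ is also absolutely split with respect to $\langle x\rangle$. -/

import Mathlib

open Subgroup

/-- Commutators lie in a normal subgroup with cyclic "complementish" quotient. -/
lemma aux_comm_mem {G : Type*} [Group G] (x y : G)
    (hN : (Subgroup.zpowers x).Normal)
    (h1 : Subgroup.zpowers x ⊔ Subgroup.zpowers y = ⊤) (u v : G) :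
    u * v * u⁻¹ * v⁻¹ ∈ Subgroup.zpowers x := by
  let π := QuotientGroup.mk' (Subgroup.zpowers x)
  have hmapx : (Subgroup.zpowers x).map π = ⊥ := by
    rw [MonoidHom.map_zpowers]
    have hx1 : π x = 1 := (QuotientGroup.eq_one_iff x).mpr (Subgroup.mem_zpowers x)
    rw [hx1, Subgroup.zpowers_one_eq_bot]
  have htop : (⊤ : Subgroup (G ⧸ Subgroup.zpowers x)) = Subgroup.zpowers (π y) := by
    calc (⊤ : Subgroup (G ⧸ Subgroup.zpowers x))
        = Subgroup.map π ⊤ :=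
          (Subgroup.map_top_of_surjective π (QuotientGroup.mk'_surjective _)).symm
      _ = Subgroup.map π (Subgroup.zpowers x ⊔ Subgroup.zpowers y) := by rw [h1]
      _ = Subgroup.zpowers (π y) := by
          rw [Subgroup.map_sup, hmapx, MonoidHom.map_zpowers, bot_sup_eq]
  obtain ⟨i, hi⟩ := Subgroup.mem_zpowers_iff.mp (htop ▸ Subgroup.mem_top (π u))
  obtain ⟨j, hj⟩ := Subgroup.mem_zpowers_iff.mp (htop ▸ Subgroup.mem_top (π v))
  have hone : π (u * v * u⁻¹ * v⁻¹) = 1 := by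
    simp only [map_mul, map_inv, ← hi, ← hj]
    group
  exact (QuotientGroup.eq_one_iff _).mp hone

/-- If `orderOf w = p ^ s` with `s ≠ 0`, then `w ^ p ^ (s-1)` has order `p`. -/
lemma aux_ord {G : Type*} [Group G] [Finite G] {p : ℕ} [hp : Fact p.Prime] (w : G) {s : ℕ}
    (hs : orderOf w = p ^ s) (h1 : s ≠ 0) : orderOf (w ^ (p ^ (s - 1))) = p := by
  rw [orderOf_pow, hs, Nat.gcd_eq_right (pow_dvd_pow p (Nat.sub_le s 1)),
    Nat.pow_div (Nat.sub_le s 1) hp.out.pos, Nat.sub_sub_self (Nat.one_le_iff_ne_zero.mpr h1),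
    pow_one]

/-- Any element of order `p` in a cyclic `p`-group generates the same subgroup as
`x ^ p ^ (e-1)` (both directions of membership). -/
lemma aux_claim {G : Type*} [Group G] [Finite G] {p : ℕ} [hp : Fact p.Prime] {x u : G} {e : ℕ}
    (he : orderOf x = p ^ e) (hu : u ∈ Subgroup.zpowers x) (hup : orderOf u = p) :
    u ∈ Subgroup.zpowers (x ^ (p ^ (e - 1))) ∧
      (x ^ (p ^ (e - 1))) ∈ Subgroup.zpowers u := by
  have he1 : e ≠ 0 := by
    rintro rfl
    rw [pow_zero, orderOf_eq_one_iff] at he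
    subst he
    rw [Subgroup.zpowers_one_eq_bot, Subgroup.mem_bot] at hu
    rw [hu, orderOf_one] at hup
    exact hp.out.ne_one hup.symm
  obtain ⟨i, hi⟩ := (Submonoid.mem_powers_iff u x).mp (mem_powers_iff_mem_zpowers.mpr hu)
  have hord : orderOf (x ^ i) = p := by rw [hi, hup]
  rw [orderOf_pow, he] at hord
  obtain ⟨t, ht_le, ht⟩ := (Nat.dvd_prime_pow hp.out).mp (Nat.gcd_dvd_left (p ^ e) i)
  rw [ht, Nat.pow_div ht_le hp.out.pos] at hord
  have het : e - t = 1 := Nat.pow_right_injective hp.out.two_le (by simpa using hord)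
  have ht' : t = e - 1 := by omega
  have hgcd : Nat.gcd (p ^ e) i = p ^ (e - 1) := by rw [ht, ht']
  have hdvd_i : p ^ (e - 1) ∣ i := hgcd ▸ Nat.gcd_dvd_right (p ^ e) i
  obtain ⟨i₀, rfl⟩ := hdvd_i
  have hu_pow : (x ^ (p ^ (e - 1))) ^ i₀ = u := by rw [← pow_mul, hi]
  refine ⟨⟨(i₀ : ℤ), by simpa using hu_pow⟩, ?_⟩
  -- coprimality of i₀ with p
  have hpe : p ^ e = p ^ (e - 1) * p := by
    rw [← pow_succ]
    congr 1
    omega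
  have hcop : Nat.gcd p i₀ = 1 := by
    have h2 : p ^ (e - 1) * Nat.gcd p i₀ = p ^ (e - 1) * 1 := by
      rw [mul_one, ← Nat.gcd_mul_left, ← hpe, hgcd]
    exact Nat.eq_of_mul_eq_mul_left (pow_pos hp.out.pos _) h2
  have hw0 : orderOf (x ^ (p ^ (e - 1))) = p := aux_ord x he he1
  obtain ⟨m, -, hm⟩ := Nat.exists_mul_mod_eq_one_of_coprime
    (Nat.coprime_comm.mp hcop) hp.out.one_lt
  refine ⟨(m : ℤ), ?_⟩
  show u ^ (m : ℤ) = x ^ p ^ (e - 1)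
  rw [zpow_natCast, ← hu_pow, ← pow_mul, ← pow_mod_orderOf, hw0, hm, pow_one]

/-- Key lemma: a subgroup intersects `zpowers x` trivially iff it misses the
distinguished order-`p` element `z` of `zpowers x`. -/
lemma aux_inf_iff {G : Type*} [Group G] [Finite G] {p : ℕ} [Fact p.Prime]
    (hp : IsPGroup p G) {x z : G} (hz : z ∈ Subgroup.zpowers x) (hzp : orderOf z = p)
    (K : Subgroup G) : K ⊓ Subgroup.zpowers x = ⊥ ↔ z ∉ K := by
  constructor
  · intro h hzK
    have : z ∈ K ⊓ Subgroup.zpowers x := Subgroup.mem_inf.mpr ⟨hzK, hz⟩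
    rw [h, Subgroup.mem_bot] at this
    rw [this, orderOf_one] at hzp
    exact (Fact.out : p.Prime).ne_one hzp.symm
  · intro hzK
    by_contra hne
    obtain ⟨w, hwmem, hw1⟩ := (K ⊓ Subgroup.zpowers x).bot_or_exists_ne_one.resolve_left hne
    obtain ⟨hwK, hwX⟩ := Subgroup.mem_inf.mp hwmem
    -- orderOf x is a power of p
    obtain ⟨n, hn⟩ := hp x
    obtain ⟨e, _, he⟩ := (Nat.dvd_prime_pow (Fact.out : p.Prime)).mp
      (orderOf_dvd_of_pow_eq_one hn)
    -- orderOf w is a power of p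
    obtain ⟨n', hn'⟩ := hp w
    obtain ⟨s, _, hs⟩ := (Nat.dvd_prime_pow (Fact.out : p.Prime)).mp
      (orderOf_dvd_of_pow_eq_one hn')
    have hs0 : s ≠ 0 := by
      rintro rfl
      rw [pow_zero, orderOf_eq_one_iff] at hs
      exact hw1 hs
    -- w' := w ^ p^(s-1) has order p and lies in zpowers x
    set w' := w ^ (p ^ (s - 1)) with hw'def
    have hw'p : orderOf w' = p := aux_ord w hs hs0
    have hw'X : w' ∈ Subgroup.zpowers x := Subgroup.pow_mem _ hwX _
    obtain ⟨hz1, _⟩ := aux_claim he hz hzp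
    obtain ⟨_, hz2⟩ := aux_claim he hw'X hw'p
    -- z ∈ zpowers (x^(p^(e-1))) ≤ zpowers w' ≤ zpowers w ≤ K
    have h3 : z ∈ Subgroup.zpowers w' := Subgroup.zpowers_le.mpr hz2 hz1
    have h4 : z ∈ Subgroup.zpowers w :=
      Subgroup.zpowers_le.mpr (Subgroup.pow_mem _ (Subgroup.mem_zpowers w) _) h3
    exact hzK (Subgroup.zpowers_le.mpr hwK h4)

lemma aux_inj {G : Type*} [Group G] {H K : Subgroup G} (h : H ⊓ K = ⊥) :
    Function.Injective (fun q : H × K => (q.1 : G) * q.2) := by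
  rintro ⟨⟨h1, hh1⟩, ⟨k1, hk1⟩⟩ ⟨⟨h2, hh2⟩, ⟨k2, hk2⟩⟩ heq
  have heq' : h1 * k1 = h2 * k2 := heq
  have key : h2⁻¹ * h1 = k2 * k1⁻¹ := by
    calc h2⁻¹ * h1 = h2⁻¹ * (h1 * k1) * k1⁻¹ := by group
      _ = h2⁻¹ * (h2 * k2) * k1⁻¹ := by rw [heq']
      _ = k2 * k1⁻¹ := by group
  have memH : h2⁻¹ * h1 ∈ H := mul_mem (inv_mem hh2) hh1
  have memK : h2⁻¹ * h1 ∈ K := key ▸ mul_mem hk2 (inv_mem hk1)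
  have mem : h2⁻¹ * h1 ∈ H ⊓ K := Subgroup.mem_inf.mpr ⟨memH, memK⟩
  rw [h, Subgroup.mem_bot] at mem
  have hh : h1 = h2 := by
    have := mem
    rw [inv_mul_eq_one] at this
    exact this.symm
  have hk : k1 = k2 := by
    have : k2 * k1⁻¹ = 1 := by rw [← key, mem]
    rw [mul_inv_eq_one] at this
    exact this.symm
  ext <;> simp [hh, hk]

lemma aux_card_le {G : Type*} [Group G] [Finite G] {H K : Subgroup G} (h : H ⊓ K = ⊥) :
    Nat.card H * Nat.card K ≤ Nat.card G := by
  have := Nat.card_le_card_of_injective _ (aux_inj h)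
  rwa [Nat.card_prod] at this

lemma aux_card_eq {G : Type*} [Group G] [Finite G] {H K : Subgroup G} [hN : H.Normal]
    (hsup : H ⊔ K = ⊤) (hinf : H ⊓ K = ⊥) :
    Nat.card H * Nat.card K = Nat.card G := by
  have hsurj : Function.Surjective (fun q : H × K => (q.1 : G) * q.2) := by
    intro g
    have hg : g ∈ ((H ⊔ K : Subgroup G) : Set G) := by rw [hsup]; trivial
    rw [Subgroup.normal_mul] at hg
    obtain ⟨h', hh', k', hk', rfl⟩ := hg
    exact ⟨(⟨h', hh'⟩, ⟨k', hk'⟩), rfl⟩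
  have := Nat.card_eq_of_bijective _ ⟨aux_inj hinf, hsurj⟩
  rwa [Nat.card_prod] at this

lemma aux_sup_top {G : Type*} [Group G] [Finite G] {H K : Subgroup G}
    (hinf : H ⊓ K = ⊥) (hcard : Nat.card H * Nat.card K = Nat.card G) :
    H ⊔ K = ⊤ := by
  have hbij : Function.Bijective (fun q : H × K => (q.1 : G) * q.2) :=
    (Nat.bijective_iff_injective_and_card _).mpr
      ⟨aux_inj hinf, by rw [Nat.card_prod]; exact hcard⟩
  rw [eq_top_iff']
  intro g
  obtain ⟨⟨h', k'⟩, rfl⟩ := hbij.2 g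
  exact mul_mem (Subgroup.mem_sup_left h'.2) (Subgroup.mem_sup_right k'.2)

theorem stmt_5 (p : ℕ) [Fact p.Prime] (G : Type*) [Group G] [Finite G]
    (hp : IsPGroup p G)
    (hna : ¬ ∀ g h : G, g * h = h * g)
    (x y a b : G)
    (hNx : (Subgroup.zpowers x).Normal)
    (hx1 : Subgroup.zpowers x ⊔ Subgroup.zpowers y = ⊤)
    (hx2 : Subgroup.zpowers x ⊓ Subgroup.zpowers y = ⊥)
    (hNa : (Subgroup.zpowers a).Normal)
    (ha1 : Subgroup.zpowers a ⊔ Subgroup.zpowers b = ⊤)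
    (ha2 : Subgroup.zpowers a ⊓ Subgroup.zpowers b = ⊥)
    (habs : ∀ g : G, Subgroup.zpowers g ⊓ Subgroup.zpowers a = ⊥ →
      ∃ c : G, g ∈ Subgroup.zpowers c ∧
        Subgroup.zpowers a ⊔ Subgroup.zpowers c = ⊤ ∧
        Subgroup.zpowers a ⊓ Subgroup.zpowers c = ⊥) :
    ∀ g : G, Subgroup.zpowers g ⊓ Subgroup.zpowers x = ⊥ →
      ∃ c : G, g ∈ Subgroup.zpowers c ∧
        Subgroup.zpowers x ⊔ Subgroup.zpowers c = ⊤ ∧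
        Subgroup.zpowers x ⊓ Subgroup.zpowers c = ⊥ := by
  -- construct the common order-p element z ∈ ⟨x⟩ ∩ ⟨a⟩
  push_neg at hna
  obtain ⟨u, v, huv⟩ := hna
  set k := u * v * u⁻¹ * v⁻¹ with hkdef
  have hk1 : k ≠ 1 := by
    intro h
    apply huv
    have h' : u * v * u⁻¹ = v := by
      rw [hkdef] at h
      rwa [mul_inv_eq_one] at h
    rw [mul_inv_eq_iff_eq_mul] at h'
    exact h'
  have hkX : k ∈ Subgroup.zpowers x := aux_comm_mem x y hNx hx1 u v
  have hkA : k ∈ Subgroup.zpowers a := aux_comm_mem a b hNa ha1 u v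
  obtain ⟨n, hn⟩ := hp k
  obtain ⟨t, _, ht⟩ := (Nat.dvd_prime_pow (Fact.out : p.Prime)).mp
    (orderOf_dvd_of_pow_eq_one hn)
  have ht0 : t ≠ 0 := by
    rintro rfl
    rw [pow_zero, orderOf_eq_one_iff] at ht
    exact hk1 ht
  set z := k ^ (p ^ (t - 1)) with hzdef
  have hzp : orderOf z = p := aux_ord k ht ht0
  have hzX : z ∈ Subgroup.zpowers x := Subgroup.pow_mem _ hkX _
  have hzA : z ∈ Subgroup.zpowers a := Subgroup.pow_mem _ hkA _
  have iffX := fun K => aux_inf_iff hp hzX hzp K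
  have iffA := fun K => aux_inf_iff hp hzA hzp K
  intro g hg
  -- transfer the trivial-intersection hypothesis from x to a
  have hgA : Subgroup.zpowers g ⊓ Subgroup.zpowers a = ⊥ :=
    (iffA _).mpr ((iffX _).mp hg)
  obtain ⟨c, hgc, hsupAC, hinfAC⟩ := habs g hgA
  have hcA : Subgroup.zpowers c ⊓ Subgroup.zpowers a = ⊥ := by
    rwa [inf_comm] at hinfAC
  have hcX : Subgroup.zpowers x ⊓ Subgroup.zpowers c = ⊥ := by
    rw [inf_comm]
    exact (iffX _).mpr ((iffA _).mp hcA)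
  have hyX : Subgroup.zpowers y ⊓ Subgroup.zpowers x = ⊥ := by rwa [inf_comm] at hx2
  have hyA : Subgroup.zpowers a ⊓ Subgroup.zpowers y = ⊥ := by
    rw [inf_comm]
    exact (iffA _).mpr ((iffX _).mp hyX)
  -- counting argument
  have hAC : Nat.card (Subgroup.zpowers a) * Nat.card (Subgroup.zpowers c) = Nat.card G :=
    aux_card_eq hsupAC hinfAC
  have hXY : Nat.card (Subgroup.zpowers x) * Nat.card (Subgroup.zpowers y) = Nat.card G :=
    aux_card_eq hx1 hx2
  have hAY : Nat.card (Subgroup.zpowers a) * Nat.card (Subgroup.zpowers y) ≤ Nat.card G :=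
    aux_card_le hyA
  have hXC : Nat.card (Subgroup.zpowers x) * Nat.card (Subgroup.zpowers c) ≤ Nat.card G :=
    aux_card_le hcX
  have hposA : 0 < Nat.card (Subgroup.zpowers a) := Nat.card_pos
  have hposX : 0 < Nat.card (Subgroup.zpowers x) := Nat.card_pos
  have hYleC : Nat.card (Subgroup.zpowers y) ≤ Nat.card (Subgroup.zpowers c) :=
    Nat.le_of_mul_le_mul_left (by rw [hAC] at *; omega) hposA
  have hCleY : Nat.card (Subgroup.zpowers c) ≤ Nat.card (Subgroup.zpowers y) :=
    Nat.le_of_mul_le_mul_left (by rw [hXY] at *; omega) hposX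
  have hCY : Nat.card (Subgroup.zpowers c) = Nat.card (Subgroup.zpowers y) :=
    le_antisymm hCleY hYleC
  have hXCcard : Nat.card (Subgroup.zpowers x) * Nat.card (Subgroup.zpowers c) = Nat.card G := by
    rw [hCY]; exact hXY
  exact ⟨c, hgc, aux_sup_top hcX hXCcard, hcX⟩
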